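/- Let Y₁, Y₂ be independent Exponential(1) random variables, X an independent random variable with standard Laplace density g(x) = e^{-|x|}/2, and α > 0. Let T = X/α + Y₂ and F_T its CDF. Let Z = (Z₁, Z₂) be distributed as (Y₁, Y₂) conditional on the event {X < α(Y₁ - Y₂)}. Then Z₁ has density 2 e^{-z} F_T(z) and Z₂ has density 2 e^{-z} (1 - F_T(z)) on (0, ∞). -/

import Mathlib

open MeasureTheory ProbabilityTheory Set

namespace ELMaux

noncomputable def fE : ℝ → ENNReal := fun x => ENNReal.ofReal (if 0 < x then Real.exp (-x) else 0)
noncomputable def fL : ℝ → ENNReal := fun x => ENNReal.ofReal (Real.exp (-|x|) / 2)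
noncomputable def muE : Measure ℝ := volume.withDensity fE
noncomputable def muL : Measure ℝ := volume.withDensity fL

lemma measurable_fE : Measurable fE := by
  apply Measurable.ennreal_ofReal
  exact Measurable.ite measurableSet_Ioi (by fun_prop) measurable_const

lemma measurable_fL : Measurable fL := by
  apply Measurable.ennreal_ofReal
  fun_prop

lemma fE_eq : fE = (Ioi (0:ℝ)).indicator (fun x => ENNReal.ofReal (Real.exp (-x))) := by
  ext x
  by_cases h : 0 < x <;> simp [fE, indicator, h, mem_Ioi]

lemma exp_neg_integrable : IntegrableOn (fun x => Real.exp (-x)) (Ioi (0:ℝ)) := by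
  simpa using exp_neg_integrableOn_Ioi 0 one_pos

instance : IsProbabilityMeasure muE := by
  constructor
  rw [muE, withDensity_apply _ MeasurableSet.univ, Measure.restrict_univ, fE_eq,
    lintegral_indicator measurableSet_Ioi]
  rw [← ofReal_integral_eq_lintegral_ofReal exp_neg_integrable
    (Filter.Eventually.of_forall fun x => (Real.exp_pos _).le)]
  rw [integral_exp_neg_Ioi]
  simp

lemma muL_singleton (a : ℝ) : muL {a} = 0 :=
  withDensity_absolutelyContinuous volume fL (by simp)

lemma negmap : Measure.map (fun x : ℝ => -x) muL = muL := by
  ext s hs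
  rw [Measure.map_apply measurable_neg hs, muL,
    withDensity_apply _ (hs.preimage measurable_neg), withDensity_apply _ hs]
  have hn : MeasurePreserving (fun x : ℝ => -x) volume volume :=
    Measure.measurePreserving_neg _
  have h2 := (hn.restrict_preimage hs).lintegral_comp measurable_fL
  rw [← h2]
  refine lintegral_congr fun x => ?_
  simp [fL, abs_neg]

lemma muL_Ioi : muL (Ioi (0:ℝ)) = ENNReal.ofReal (1/2) := by
  rw [muL, withDensity_apply _ measurableSet_Ioi]
  have h1 : ∀ᵐ x ∂(volume.restrict (Ioi (0:ℝ))), fL x = ENNReal.ofReal (Real.exp (-x) / 2) := by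
    filter_upwards [ae_restrict_mem measurableSet_Ioi] with x hx
    simp [fL, abs_of_pos (mem_Ioi.mp hx)]
  rw [lintegral_congr_ae h1]
  rw [← ofReal_integral_eq_lintegral_ofReal (exp_neg_integrable.div_const 2)
    (Filter.Eventually.of_forall fun x => by positivity)]
  rw [integral_div, integral_exp_neg_Ioi]
  norm_num

lemma muL_Iio_zero : muL (Iio (0:ℝ)) = ENNReal.ofReal (1/2) := by
  have : muL (Iio (0:ℝ)) = muL ((fun x : ℝ => -x) ⁻¹' (Ioi 0)) := by
    congr 1
    ext x
    simp
  rw [this, ← Measure.map_apply measurable_neg measurableSet_Ioi, negmap, muL_Ioi]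

instance : IsProbabilityMeasure muL := by
  constructor
  have h1 : (univ : Set ℝ) = Iio 0 ∪ Ici 0 := (Iio_union_Ici).symm
  have h2 : Ici (0:ℝ) = Ioi 0 ∪ {0} := (Ioi_union_left).symm
  rw [h1, measure_union (by simp [disjoint_left]) measurableSet_Ici, h2,
    measure_union (by simp) (measurableSet_singleton _), muL_singleton, add_zero,
    muL_Iio_zero, muL_Ioi, ← ENNReal.ofReal_add (by norm_num) (by norm_num)]
  norm_num

lemma muL_Iic (t : ℝ) : muL (Iic t) = muL (Iio t) := by
  rw [← Iio_union_right, measure_union (by simp) (measurableSet_singleton _),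
    muL_singleton, add_zero]

lemma muL_Ioi_eq (c : ℝ) : muL (Ioi c) = muL (Iio (-c)) := by
  conv_lhs => rw [← negmap]
  rw [Measure.map_apply measurable_neg measurableSet_Ioi]
  congr 1
  ext x
  simp [lt_neg]

lemma muL_split (t : ℝ) : muL (Iio t) + muL (Iio (-t)) = 1 := by
  rw [← muL_Ioi_eq]
  have h2 : Ici t = Ioi t ∪ {t} := (Ioi_union_left).symm
  have h3 : muL (Iio t ∪ Ici t) = muL (Iio t) + muL (Ici t) :=
    measure_union (by simp [disjoint_left]) measurableSet_Ici
  rw [Iio_union_Ici, measure_univ, h2, measure_union (by simp) (measurableSet_singleton _),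
    muL_singleton, add_zero] at h3
  exact h3.symm


noncomputable def H : ℝ → ENNReal := fun t => muL (Iio t)

lemma measurable_H : Measurable H :=
  Monotone.measurable fun _ _ hab => measure_mono (Iio_subset_Iio hab)

lemma H_le_one (t : ℝ) : H t ≤ 1 := prob_le_one

lemma H_symm (t : ℝ) : H (-t) = 1 - H t := by
  have h := muL_split t
  rw [add_comm] at h
  exact ENNReal.eq_sub_of_add_eq (measure_ne_top _ _) h

noncomputable def K (α : ℝ) : ℝ → ENNReal := fun t => ∫⁻ u, H (α * (t - u)) ∂muE

lemma measurable_K (α : ℝ) : Measurable (K α) :=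
  Measurable.lintegral_prod_right (f := fun t u => H (α * (t - u)))
    (measurable_H.comp (by fun_prop))

lemma K_le_one (α t : ℝ) : K α t ≤ 1 := by
  calc K α t ≤ ∫⁻ _, 1 ∂muE := lintegral_mono fun u => H_le_one _
  _ = 1 := by simp

lemma K_ne_top (α t : ℝ) : K α t ≠ ⊤ :=
  (lt_of_le_of_lt (K_le_one α t) ENNReal.one_lt_top).ne

lemma L_eq (α t : ℝ) : (∫⁻ u, H (α * (u - t)) ∂muE) = 1 - K α t := by
  have hpt : ∀ u : ℝ, H (α * (u - t)) = 1 - H (α * (t - u)) := by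
    intro u
    rw [show α * (u - t) = -(α * (t - u)) by ring, H_symm]
  simp_rw [hpt]
  rw [lintegral_sub (f := fun _ => 1) (g := fun u => H (α * (t - u)))
    (measurable_H.comp (by fun_prop))
    (K_ne_top α t) (Filter.Eventually.of_forall fun u => H_le_one _)]
  simp [K]

lemma nu_C (α : ℝ) (hα : 0 < α) (t : ℝ) :
    (muL.prod (muE.prod muE)) {p : ℝ × ℝ × ℝ | p.1 / α + p.2.2 ≤ t} = K α t := by
  have hC : MeasurableSet {p : ℝ × ℝ × ℝ | p.1 / α + p.2.2 ≤ t} :=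
    measurableSet_le (by fun_prop) measurable_const
  rw [Measure.prod_apply_symm hC]
  have hsec : ∀ y : ℝ × ℝ,
      (fun x => (x, y)) ⁻¹' {p : ℝ × ℝ × ℝ | p.1 / α + p.2.2 ≤ t} = Iic (α * (t - y.2)) := by
    intro y
    ext x
    simp only [mem_preimage, mem_setOf_eq, mem_Iic]
    rw [show α * (t - y.2) = (t - y.2) * α from mul_comm _ _, ← div_le_iff₀ hα]
    constructor <;> intro h <;> linarith
  simp_rw [hsec, muL_Iic]
  rw [lintegral_prod (fun y : ℝ × ℝ => muL (Iio (α * (t - y.2))))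
    ((measurable_H.comp (by fun_prop) : Measurable fun y : ℝ × ℝ =>
      H (α * (t - y.2))).aemeasurable)]
  simp only [lintegral_const, measure_univ, mul_one]
  rfl

lemma nu_B1 (α : ℝ) (s : Set ℝ) (hs : MeasurableSet s) :
    (muL.prod (muE.prod muE)) {p : ℝ × ℝ × ℝ | p.2.1 ∈ s ∧ p.1 < α * (p.2.1 - p.2.2)} =
      ∫⁻ z in s, fE z * K α z ∂volume := by
  classical
  have hB : MeasurableSet {p : ℝ × ℝ × ℝ | p.2.1 ∈ s ∧ p.1 < α * (p.2.1 - p.2.2)} :=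
    (measurable_snd.fst hs).inter (measurableSet_lt measurable_fst (by fun_prop))
  rw [Measure.prod_apply_symm hB]
  have hsec : ∀ y : ℝ × ℝ,
      muL ((fun x => (x, y)) ⁻¹' {p : ℝ × ℝ × ℝ | p.2.1 ∈ s ∧ p.1 < α * (p.2.1 - p.2.2)}) =
        if y.1 ∈ s then H (α * (y.1 - y.2)) else 0 := by
    intro y
    by_cases h : y.1 ∈ s
    · rw [if_pos h]
      congr 1
      ext x
      simp [h, H, mem_Iio]
    · rw [if_neg h]
      convert measure_empty (μ := muL)
      ext x
      simp [h]
  simp_rw [hsec]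
  rw [lintegral_prod (fun y : ℝ × ℝ => if y.1 ∈ s then H (α * (y.1 - y.2)) else 0)
    ((Measurable.ite (measurable_fst hs)
      (measurable_H.comp (by fun_prop)) measurable_const : Measurable fun y : ℝ × ℝ =>
        if y.1 ∈ s then H (α * (y.1 - y.2)) else 0).aemeasurable)]
  have hinner : ∀ y₁ : ℝ,
      (∫⁻ y₂, (if y₁ ∈ s then H (α * (y₁ - y₂)) else 0) ∂muE) = s.indicator (K α) y₁ := by
    intro y₁
    by_cases h : y₁ ∈ s <;> simp [h, K, indicator]
  simp_rw [hinner]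
  rw [lintegral_indicator hs, muE, restrict_withDensity hs,
    lintegral_withDensity_eq_lintegral_mul _ measurable_fE (measurable_K α)]
  rfl

lemma nu_B2 (α : ℝ) (s : Set ℝ) (hs : MeasurableSet s) :
    (muL.prod (muE.prod muE)) {p : ℝ × ℝ × ℝ | p.2.2 ∈ s ∧ p.1 < α * (p.2.1 - p.2.2)} =
      ∫⁻ z in s, fE z * (1 - K α z) ∂volume := by
  classical
  have hB : MeasurableSet {p : ℝ × ℝ × ℝ | p.2.2 ∈ s ∧ p.1 < α * (p.2.1 - p.2.2)} :=
    (measurable_snd.snd hs).inter (measurableSet_lt measurable_fst (by fun_prop))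
  rw [Measure.prod_apply_symm hB]
  have hsec : ∀ y : ℝ × ℝ,
      muL ((fun x => (x, y)) ⁻¹' {p : ℝ × ℝ × ℝ | p.2.2 ∈ s ∧ p.1 < α * (p.2.1 - p.2.2)}) =
        if y.2 ∈ s then H (α * (y.1 - y.2)) else 0 := by
    intro y
    by_cases h : y.2 ∈ s
    · rw [if_pos h]
      congr 1
      ext x
      simp [h, H, mem_Iio]
    · rw [if_neg h]
      convert measure_empty (μ := muL)
      ext x
      simp [h]
  simp_rw [hsec]
  rw [lintegral_prod_symm (fun y : ℝ × ℝ => if y.2 ∈ s then H (α * (y.1 - y.2)) else 0)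
    ((Measurable.ite (measurable_snd hs)
      (measurable_H.comp (by fun_prop)) measurable_const : Measurable fun y : ℝ × ℝ =>
        if y.2 ∈ s then H (α * (y.1 - y.2)) else 0).aemeasurable)]
  have hinner : ∀ y₂ : ℝ,
      (∫⁻ y₁, (if y₂ ∈ s then H (α * (y₁ - y₂)) else 0) ∂muE) =
        s.indicator (fun z => 1 - K α z) y₂ := by
    intro y₂
    by_cases h : y₂ ∈ s <;> simp [h, indicator, L_eq]
  simp_rw [hinner]
  rw [lintegral_indicator hs, muE, restrict_withDensity hs,
    lintegral_withDensity_eq_lintegral_mul _ measurable_fE (g := fun z => 1 - K α z)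
      (measurable_const.sub (measurable_K α))]
  rfl

lemma nu_S (α : ℝ) :
    (muL.prod (muE.prod muE)) {p : ℝ × ℝ × ℝ | p.1 < α * (p.2.1 - p.2.2)} = 1 / 2 := by
  set ν := muL.prod (muE.prod muE) with hν
  set S := {p : ℝ × ℝ × ℝ | p.1 < α * (p.2.1 - p.2.2)} with hS_def
  have hS : MeasurableSet S := measurableSet_lt measurable_fst (by fun_prop)
  set S' := {p : ℝ × ℝ × ℝ | α * (p.2.1 - p.2.2) < p.1} with hS'_def
  have hS' : MeasurableSet S' := measurableSet_lt (by fun_prop) measurable_fst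
  set S0 := {p : ℝ × ℝ × ℝ | p.1 = α * (p.2.1 - p.2.2)} with hS0_def
  have hS0 : MeasurableSet S0 := measurableSet_eq_fun measurable_fst (by fun_prop)
  have hmp : MeasurePreserving (Prod.map (fun x : ℝ => -x) (Prod.swap : ℝ × ℝ → ℝ × ℝ)) ν ν :=
    MeasurePreserving.prod ⟨measurable_neg, negmap⟩ Measure.measurePreserving_swap
  have hpre : (Prod.map (fun x : ℝ => -x) (Prod.swap : ℝ × ℝ → ℝ × ℝ)) ⁻¹' S = S' := by
    ext p
    simp only [hS_def, hS'_def, mem_preimage, mem_setOf_eq, Prod.map_fst, Prod.map_snd,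
      Prod.fst_swap, Prod.snd_swap]
    have h : α * (p.2.2 - p.2.1) = -(α * (p.2.1 - p.2.2)) := by ring
    constructor <;> intro hh <;> linarith
  have hSS' : ν S' = ν S := by
    rw [← hpre]
    exact hmp.measure_preimage hS.nullMeasurableSet
  have hS0z : ν S0 = 0 := by
    rw [hν, Measure.prod_apply_symm hS0]
    have : ∀ y : ℝ × ℝ, (fun x => (x, y)) ⁻¹' S0 = {α * (y.1 - y.2)} := by
      intro y
      ext x
      simp [hS0_def]
    simp_rw [this, muL_singleton]
    simp
  have hu : (univ : Set (ℝ × ℝ × ℝ)) = S ∪ (S0 ∪ S') := by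
    ext p
    simp only [mem_univ, mem_union, mem_setOf_eq, hS_def, hS0_def, hS'_def, true_iff]
    exact lt_trichotomy _ _
  have hd1 : Disjoint S (S0 ∪ S') := by
    rw [disjoint_left]
    rintro p hp (h | h) <;>
      simp only [hS_def, hS0_def, hS'_def, mem_setOf_eq] at hp h <;> linarith
  have hd2 : Disjoint S0 S' := by
    rw [disjoint_left]
    intro p hp h
    simp only [hS0_def, hS'_def, mem_setOf_eq] at hp h
    linarith
  have h1 : (1 : ENNReal) = ν S + ν S := by
    have := measure_univ (μ := ν)
    rw [hu, measure_union hd1 (hS0.union hS'), measure_union hd2 hS', hS0z, zero_add,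
      hSS'] at this
    exact this.symm
  rw [← two_mul] at h1
  exact (ENNReal.eq_div_iff two_ne_zero ENNReal.ofNat_ne_top).mpr h1.symm

end ELMaux

open ELMaux in

/-- Equation (17) with ω = 1: if `Y₁, Y₂` are independent Exponential(1), `X` is an
independent standard Laplace variable, `α > 0`, `T = X/α + Y₂` with CDF `F_T`, and
`Z = (Y₁, Y₂)` conditioned on `{X < α(Y₁ - Y₂)}`, then `Z₁` has density
`2 e^{-z} F_T(z)` and `Z₂` has density `2 e^{-z} (1 - F_T(z))` on `(0, ∞)`. -/
theorem exponential_laplace_marginals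
    {Ω : Type*} [MeasurableSpace Ω] (P : Measure Ω) [IsProbabilityMeasure P]
    (α : ℝ) (hα : 0 < α)
    (X Y₁ Y₂ : Ω → ℝ)
    (hX : Measurable X) (hY₁ : Measurable Y₁) (hY₂ : Measurable Y₂)
    (hYlaw₁ : Measure.map Y₁ P = volume.withDensity
      (fun x => ENNReal.ofReal (if 0 < x then Real.exp (-x) else 0)))
    (hYlaw₂ : Measure.map Y₂ P = volume.withDensity
      (fun x => ENNReal.ofReal (if 0 < x then Real.exp (-x) else 0)))
    (hXlaw : Measure.map X P = volume.withDensity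
      (fun x => ENNReal.ofReal (Real.exp (-|x|) / 2)))
    (hindepY : IndepFun Y₁ Y₂ P)
    (hindepX : IndepFun X (fun ω => (Y₁ ω, Y₂ ω)) P)
    (FT : ℝ → ℝ)
    (hFT : ∀ t, FT t = (P {ω | X ω / α + Y₂ ω ≤ t}).toReal) :
    Measure.map Y₁ (ProbabilityTheory.cond P {ω | X ω < α * (Y₁ ω - Y₂ ω)}) =
        volume.withDensity
          (fun z => ENNReal.ofReal (if 0 < z then 2 * Real.exp (-z) * FT z else 0)) ∧
      Measure.map Y₂ (ProbabilityTheory.cond P {ω | X ω < α * (Y₁ ω - Y₂ ω)}) =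
        volume.withDensity
          (fun z => ENNReal.ofReal (if 0 < z then 2 * Real.exp (-z) * (1 - FT z) else 0)) := by
  classical
  have hφ : Measurable (fun ω => (X ω, (Y₁ ω, Y₂ ω))) := hX.prodMk (hY₁.prodMk hY₂)
  have hpair : Measure.map (fun ω => (Y₁ ω, Y₂ ω)) P = muE.prod muE := by
    have h := (indepFun_iff_map_prod_eq_prod_map_map hY₁.aemeasurable hY₂.aemeasurable).mp hindepY
    rw [hYlaw₁, hYlaw₂] at h
    exact h
  have hjoint : Measure.map (fun ω => (X ω, (Y₁ ω, Y₂ ω))) P = muL.prod (muE.prod muE) := by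
    have h := (indepFun_iff_map_prod_eq_prod_map_map hX.aemeasurable
      (hY₁.prodMk hY₂).aemeasurable).mp hindepX
    rw [hXlaw, hpair] at h
    exact h
  -- the CDF equals K
  have hPev : ∀ t, P {ω | X ω / α + Y₂ ω ≤ t} = K α t := by
    intro t
    have hC : MeasurableSet {p : ℝ × ℝ × ℝ | p.1 / α + p.2.2 ≤ t} :=
      measurableSet_le (by fun_prop) measurable_const
    have h1 : {ω | X ω / α + Y₂ ω ≤ t} =
        (fun ω => (X ω, (Y₁ ω, Y₂ ω))) ⁻¹' {p : ℝ × ℝ × ℝ | p.1 / α + p.2.2 ≤ t} := rfl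
    rw [h1, ← Measure.map_apply hφ hC, hjoint, nu_C α hα t]
  have hofK : ∀ t, ENNReal.ofReal (FT t) = K α t := by
    intro t
    rw [hFT t, hPev t, ENNReal.ofReal_toReal (K_ne_top α t)]
  have hFTnn : ∀ t, 0 ≤ FT t := fun t => by rw [hFT t]; exact ENNReal.toReal_nonneg
  -- the conditioning event
  have hS : MeasurableSet {p : ℝ × ℝ × ℝ | p.1 < α * (p.2.1 - p.2.2)} :=
    measurableSet_lt measurable_fst (by fun_prop)
  have hArfl : {ω | X ω < α * (Y₁ ω - Y₂ ω)} =
      (fun ω => (X ω, (Y₁ ω, Y₂ ω))) ⁻¹' {p : ℝ × ℝ × ℝ | p.1 < α * (p.2.1 - p.2.2)} := rfl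
  have hAmeas : MeasurableSet {ω | X ω < α * (Y₁ ω - Y₂ ω)} := hArfl ▸ hφ hS
  have hPA : P {ω | X ω < α * (Y₁ ω - Y₂ ω)} = 1 / 2 := by
    rw [hArfl, ← Measure.map_apply hφ hS, hjoint, nu_S α]
  have hcond : ProbabilityTheory.cond P {ω | X ω < α * (Y₁ ω - Y₂ ω)} =
      (2 : ENNReal) • P.restrict {ω | X ω < α * (Y₁ ω - Y₂ ω)} := by
    rw [ProbabilityTheory.cond, hPA]
    norm_num
  constructor
  · refine Measure.ext fun s hs => ?_
    rw [Measure.map_apply hY₁ hs, hcond, Measure.smul_apply, smul_eq_mul,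
      Measure.restrict_apply (hY₁ hs)]
    have hBeq : Y₁ ⁻¹' s ∩ {ω | X ω < α * (Y₁ ω - Y₂ ω)} =
        (fun ω => (X ω, (Y₁ ω, Y₂ ω))) ⁻¹'
          {p : ℝ × ℝ × ℝ | p.2.1 ∈ s ∧ p.1 < α * (p.2.1 - p.2.2)} := rfl
    have hB : MeasurableSet {p : ℝ × ℝ × ℝ | p.2.1 ∈ s ∧ p.1 < α * (p.2.1 - p.2.2)} :=
      (measurable_snd.fst hs).inter (measurableSet_lt measurable_fst (by fun_prop))
    rw [hBeq, ← Measure.map_apply hφ hB, hjoint, nu_B1 α s hs, withDensity_apply _ hs,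
      ← lintegral_const_mul (f := fun z => fE z * K α z) 2 (measurable_fE.mul (measurable_K α))]
    refine lintegral_congr fun z => ?_
    by_cases h : 0 < z
    · rw [← hofK z]
      simp only [fE, if_pos h, if_pos h]
      rw [show (2:ℝ) * Real.exp (-z) * FT z = 2 * (Real.exp (-z) * FT z) from by ring,
        ENNReal.ofReal_mul (by norm_num : (0:ℝ) ≤ 2),
        ENNReal.ofReal_mul (Real.exp_pos _).le, ENNReal.ofReal_ofNat]
    · simp [fE, h]
  · refine Measure.ext fun s hs => ?_
    rw [Measure.map_apply hY₂ hs, hcond, Measure.smul_apply, smul_eq_mul,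
      Measure.restrict_apply (hY₂ hs)]
    have hBeq : Y₂ ⁻¹' s ∩ {ω | X ω < α * (Y₁ ω - Y₂ ω)} =
        (fun ω => (X ω, (Y₁ ω, Y₂ ω))) ⁻¹'
          {p : ℝ × ℝ × ℝ | p.2.2 ∈ s ∧ p.1 < α * (p.2.1 - p.2.2)} := rfl
    have hB : MeasurableSet {p : ℝ × ℝ × ℝ | p.2.2 ∈ s ∧ p.1 < α * (p.2.1 - p.2.2)} :=
      (measurable_snd.snd hs).inter (measurableSet_lt measurable_fst (by fun_prop))
    rw [hBeq, ← Measure.map_apply hφ hB, hjoint, nu_B2 α s hs, withDensity_apply _ hs,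
      ← lintegral_const_mul (f := fun z => fE z * (1 - K α z)) 2
        (measurable_fE.mul (measurable_const.sub (measurable_K α)))]
    refine lintegral_congr fun z => ?_
    by_cases h : 0 < z
    · have h1K : 1 - K α z = ENNReal.ofReal (1 - FT z) := by
        rw [← hofK z, ← ENNReal.ofReal_one, ← ENNReal.ofReal_sub _ (hFTnn z)]
      rw [h1K]
      simp only [fE, if_pos h, if_pos h]
      rw [show (2:ℝ) * Real.exp (-z) * (1 - FT z) = 2 * (Real.exp (-z) * (1 - FT z)) from by ring,
        ENNReal.ofReal_mul (by norm_num : (0:ℝ) ≤ 2),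
        ENNReal.ofReal_mul (Real.exp_pos _).le, ENNReal.ofReal_ofNat]
    · simp [fE, h]
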